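/- Let G be a finite abelian group and B a nonempty subset of G. For r ∈ ℕ set u_r := |rB|, where rB is the r-fold sumset of B (and 0B = {0}). Then there exists r₀ ∈ ℕ such that u_0 < u_1 < ⋯ < u_{r₀} and u_r = u_{r₀} for all r ≥ r₀. -/

import Mathlib

/-- The `r`-fold sumset of a subset `B` of an additive commutative monoid,
with the convention that the `0`-fold sumset is `{0}`. -/
def foldSumG {G : Type*} [AddCommMonoid G] (r : ℕ) (B : Set G) : Set G :=
  {z : G | ∃ f : Fin r → G, (∀ i, f i ∈ B) ∧ ∑ i, f i = z}

lemma mem_foldSumG_succ {G : Type*} [AddCommMonoid G] {B : Set G} {r : ℕ} {z : G} :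
    z ∈ foldSumG (r + 1) B ↔ ∃ b ∈ B, ∃ y ∈ foldSumG r B, z = b + y := by
  constructor
  · rintro ⟨f, hf, rfl⟩
    exact ⟨f 0, hf 0, ∑ i : Fin r, f (Fin.succ i), ⟨fun i => f (Fin.succ i), fun i => hf _, rfl⟩,
      Fin.sum_univ_succ f⟩
  · rintro ⟨b, hb, y, ⟨g, hg, rfl⟩, rfl⟩
    exact ⟨Fin.cons b g, fun i => Fin.cases hb hg i, Fin.sum_cons b g⟩

theorem card_foldSum_increases_then_stabilizes
    {G : Type*} [AddCommGroup G] [Fintype G] (B : Set G) (hB : B.Nonempty) :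
    ∃ r₀ : ℕ,
      (∀ r < r₀, (foldSumG r B).ncard < (foldSumG (r + 1) B).ncard) ∧
      (∀ r ≥ r₀, (foldSumG r B).ncard = (foldSumG r₀ B).ncard) := by
  classical
  obtain ⟨b0, hb0⟩ := hB
  set u : ℕ → ℕ := fun r => (foldSumG r B).ncard with hu
  have hmono : ∀ r, u r ≤ u (r + 1) := by
    intro r
    have himg : (fun x => b0 + x) '' foldSumG r B ⊆ foldSumG (r + 1) B := by
      rintro z ⟨y, hy, rfl⟩
      exact mem_foldSumG_succ.mpr ⟨b0, hb0, y, hy, rfl⟩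
    calc u r = ((fun x => b0 + x) '' foldSumG r B).ncard :=
          (Set.ncard_image_of_injective _ (add_right_injective b0)).symm
      _ ≤ u (r + 1) := Set.ncard_le_ncard himg (Set.toFinite _)
  have hstab : ∀ r, u (r + 1) = u r → u (r + 2) = u (r + 1) := by
    intro r h
    have heq : ∀ b ∈ B, (fun x => b + x) '' foldSumG r B = foldSumG (r + 1) B := by
      intro b hb
      apply Set.eq_of_subset_of_ncard_le
      · rintro z ⟨y, hy, rfl⟩
        exact mem_foldSumG_succ.mpr ⟨b, hb, y, hy, rfl⟩
      · rw [Set.ncard_image_of_injective _ (add_right_injective b)]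
        exact h.le
      · exact Set.toFinite _
    have h2 : foldSumG (r + 2) B = (fun x => b0 + x) '' foldSumG (r + 1) B := by
      ext z
      constructor
      · intro hz
        obtain ⟨b, hb, y, hy, rfl⟩ := mem_foldSumG_succ.mp hz
        rw [← heq b0 hb0] at hy
        obtain ⟨x, hx, rfl⟩ := hy
        refine ⟨b + x, ?_, by exact add_left_comm b0 b x⟩
        rw [← heq b hb]
        exact ⟨x, hx, rfl⟩
      · rintro ⟨y, hy, rfl⟩
        exact mem_foldSumG_succ.mpr ⟨b0, hb0, y, hy, rfl⟩
    show (foldSumG (r + 2) B).ncard = (foldSumG (r + 1) B).ncard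
    rw [h2, Set.ncard_image_of_injective _ (add_right_injective b0)]
  have hbound : ∀ r, u r ≤ Fintype.card G := by
    intro r
    calc u r ≤ (Set.univ : Set G).ncard :=
          Set.ncard_le_ncard (Set.subset_univ _) (Set.toFinite _)
      _ = Fintype.card G := by rw [Set.ncard_univ, Nat.card_eq_fintype_card]
  have hex : ∃ r, u (r + 1) = u r := by
    by_contra hc
    push_neg at hc
    have hstrict : ∀ r, u r + 1 ≤ u (r + 1) := fun r =>
      Nat.succ_le_of_lt (lt_of_le_of_ne (hmono r) (fun e => hc r e.symm))
    have hr : ∀ r, r ≤ u r := by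
      intro r
      induction r with
      | zero => exact Nat.zero_le _
      | succ n ih => exact le_trans (Nat.succ_le_succ ih) (hstrict n)
    have h1 := hr (Fintype.card G + 1)
    have h2 := hbound (Fintype.card G + 1)
    omega
  refine ⟨Nat.find hex, ?_, ?_⟩
  · intro r hr
    exact lt_of_le_of_ne (hmono r) (fun e => Nat.find_min hex hr e.symm)
  · have hconst : ∀ r ≥ Nat.find hex, u (r + 1) = u r := by
      intro r hr
      induction r, hr using Nat.le_induction with
      | base => exact Nat.find_spec hex
      | succ n hn ih => exact hstab n ih
    intro r hr
    induction r, hr using Nat.le_induction with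
    | base => rfl
    | succ n hn ih => rw [← ih]; exact hconst n hn
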